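/- Let f be holomorphic and nowhere zero on a punctured disk Δ* around 0. If the logarithmic-derivative equation h'/h = 1/f admits a solution h that is meromorphic at 0 (and not identically zero), then f extends meromorphically to 0. -/

import Mathlib

open Complex

/-- If `f` is holomorphic and nowhere zero on the punctured disk, and the equation
`h'/h = 1/f` admits a solution `h` meromorphic at `0` and not identically zero,
then `f` extends meromorphically to `0`. -/
theorem stmt2 (f h : ℂ → ℂ)
    (hf : DifferentiableOn ℂ f {z : ℂ | 0 < ‖z‖ ∧ ‖z‖ < 1})
    (hf0 : ∀ z ∈ {z : ℂ | 0 < ‖z‖ ∧ ‖z‖ < 1}, f z ≠ 0)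
    (hh : MeromorphicAt h 0)
    (hh0 : ∃ᶠ z in nhdsWithin 0 {(0 : ℂ)}ᶜ, h z ≠ 0)
    (heq : ∀ z ∈ {z : ℂ | 0 < ‖z‖ ∧ ‖z‖ < 1}, deriv h z / h z = 1 / f z) :
    MeromorphicAt f 0 := by
  -- Step 1: `deriv h` is meromorphic at 0.
  obtain ⟨n, hg⟩ := hh
  set g : ℂ → ℂ := fun z => (z - 0) ^ n • h z with hgdef
  have hg' : AnalyticAt ℂ (deriv g) 0 :=
    ((ContinuousLinearMap.apply ℂ ℂ (1 : ℂ)).analyticAt _).comp hg.fderiv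
  have hmero : MeromorphicAt h 0 := ⟨n, hg⟩
  have hev : ∀ᶠ z in nhdsWithin 0 {(0 : ℂ)}ᶜ, AnalyticAt ℂ h z :=
    hmero.eventually_analyticAt
  set F : ℂ → ℂ := fun z => (z * deriv g z - (n : ℂ) * g z) / z ^ (n + 1) with hFdef
  have hFmero : MeromorphicAt F 0 := by
    apply MeromorphicAt.div
    · exact ((MeromorphicAt.id 0).mul hg'.meromorphicAt).sub
        ((MeromorphicAt.const _ 0).mul hg.meromorphicAt)
    · exact (MeromorphicAt.id 0).pow _
  have hderiv_eq : deriv h =ᶠ[nhdsWithin 0 {(0 : ℂ)}ᶜ] F := by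
    filter_upwards [hev, self_mem_nhdsWithin] with z hz hz0
    have hz0' : z ≠ 0 := hz0
    have hhd : DifferentiableAt ℂ h z := hz.differentiableAt
    have key : z * deriv g z - (n : ℂ) * g z = z ^ (n + 1) * deriv h z := by
      rcases Nat.eq_zero_or_pos n with hn | hn
      · have hgz : deriv g z = deriv h z := by
          apply Filter.EventuallyEq.deriv_eq
          filter_upwards with w
          simp [hgdef, hn]
        simp [hgdef, hn, hgz]
      · have hdg : deriv g z = (n : ℂ) * z ^ (n - 1) * h z + z ^ n * deriv h z := by
          have h1 : HasDerivAt (fun w : ℂ => (w - 0) ^ n)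
              ((n : ℂ) * (z - 0) ^ (n - 1) * 1) z :=
            ((hasDerivAt_id z).sub_const 0).pow n
          have h2 : HasDerivAt g (((n : ℂ) * (z - 0) ^ (n - 1) * 1) * h z
              + (z - 0) ^ n * deriv h z) z := by
            exact h1.mul hhd.hasDerivAt
          simpa [mul_one, sub_zero] using h2.deriv
        have hzz : z * z ^ (n - 1) = z ^ n := by
          rw [← pow_succ', Nat.sub_add_cancel hn]
        have hgzval : g z = z ^ n * h z := by simp [hgdef, smul_eq_mul]
        rw [hdg, hgzval]
        calc z * ((n : ℂ) * z ^ (n - 1) * h z + z ^ n * deriv h z)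
              - (n : ℂ) * (z ^ n * h z)
            = (n : ℂ) * (z * z ^ (n - 1)) * h z + z ^ (n + 1) * deriv h z
              - (n : ℂ) * (z ^ n * h z) := by ring
          _ = z ^ (n + 1) * deriv h z := by rw [hzz]; ring
    have hzn : z ^ (n + 1) ≠ 0 := pow_ne_zero _ hz0'
    simp only [hFdef]
    rw [key, mul_div_cancel_left₀ _ hzn]
  have hdmero : MeromorphicAt (deriv h) 0 := hFmero.congr hderiv_eq.symm
  -- Step 2: `f` agrees with `h / deriv h` on a punctured neighborhood.
  have hGmero : MeromorphicAt (fun z => h z / deriv h z) 0 := hmero.div hdmero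
  have hS : {z : ℂ | 0 < ‖z‖ ∧ ‖z‖ < 1} ∈ nhdsWithin 0 {(0 : ℂ)}ᶜ := by
    rw [Metric.mem_nhdsWithin_iff]
    refine ⟨1, one_pos, fun z hz => ?_⟩
    have hz1 : z ∈ Metric.ball (0 : ℂ) 1 := hz.1
    have hz2 : z ≠ 0 := hz.2
    simp only [Metric.mem_ball, dist_zero_right] at hz1
    exact ⟨norm_pos_iff.mpr hz2, hz1⟩
  have hfeq : (fun z => h z / deriv h z) =ᶠ[nhdsWithin 0 {(0 : ℂ)}ᶜ] f := by
    filter_upwards [hS] with z hz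
    have h1 := heq z hz
    have h2 := hf0 z hz
    have hfz : (1 : ℂ) / f z ≠ 0 := one_div_ne_zero h2
    have hhz : h z ≠ 0 := by
      intro h0
      rw [h0, div_zero] at h1
      exact hfz h1.symm
    have hdz : deriv h z ≠ 0 := by
      intro h0
      rw [h0, zero_div] at h1
      exact hfz h1.symm
    field_simp at h1 ⊢
    linear_combination -h1
  exact hGmero.congr hfeq
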